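/- Let P be a finite poset. If there exist a, b, c, d ∈ P with a < c, b ⋖ c (b covered by c), b < d, and all other distinct pairs among {a,b,c,d} incomparable (i.e., P contains an N), then the incomparability orthoset (P, ⊥) is not Dacey. -/

import Mathlib

/-- The orthocomplement of a subset in an orthoset `(O, r)`. -/
def perp {O : Type*} (r : O → O → Prop) (X : Set O) : Set O :=
  {y | ∀ x ∈ X, r y x}

/-- Incomparability relation of a poset. -/
def incomp {P : Type*} [PartialOrder P] (x y : P) : Prop := ¬ x ≤ y ∧ ¬ y ≤ x

/-- A basis of `X` is a maximal pairwise orthogonal subset of `X`. -/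
def IsBasis {O : Type*} (r : O → O → Prop) (X B : Set O) : Prop :=
  B ⊆ X ∧ B.Pairwise r ∧ ∀ C : Set O, B ⊆ C → C ⊆ X → C.Pairwise r → C = B

/-- The orthoset is Dacey: every orthoclosed set equals the double
orthocomplement of each of its bases. -/
def IsDacey {O : Type*} (r : O → O → Prop) : Prop :=
  ∀ X : Set O, X = perp r (perp r X) →
    ∀ B : Set O, IsBasis r X B → X = perp r (perp r B)

/-- `(a,b,c,d)` form an N. -/
def FormN {P : Type*} [PartialOrder P] (a b c d : P) : Prop :=
  a < c ∧ b ⋖ c ∧ b < d ∧ incomp a b ∧ incomp a d ∧ incomp c d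

lemma incomp_symm {P : Type*} [PartialOrder P] {x y : P} (h : incomp x y) : incomp y x :=
  ⟨h.2, h.1⟩

lemma incomp_irrefl {P : Type*} [PartialOrder P] (x : P) : ¬ incomp x x :=
  fun h => h.1 le_rfl

lemma perp_anti {O : Type*} (r : O → O → Prop) {S T : Set O} (h : S ⊆ T) :
    perp r T ⊆ perp r S := fun _ hy x hx => hy x (h hx)

lemma subset_perp_perp {O : Type*} {r : O → O → Prop}
    (hsym : ∀ x y, r x y → r y x) (S : Set O) : S ⊆ perp r (perp r S) :=
  fun s hs y hy => hsym y s (hy s hs)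

theorem not_dacey_of_N {P : Type*} [PartialOrder P] [Fintype P]
    (a b c d : P) (h : FormN a b c d) :
    ¬ IsDacey (incomp (P := P)) := by
  obtain ⟨hac, hbc, hbd, hab, had, hcd⟩ := h
  intro hD
  set r : P → P → Prop := incomp with hr
  have hsym : ∀ x y : P, r x y → r y x := fun x y => incomp_symm
  set X : Set P := perp r (perp r {a, c}) with hX
  -- d is in perp {a,c}
  have hdperp : d ∈ perp r ({a, c} : Set P) := by
    intro x hx
    rcases hx with rfl | rfl
    · exact incomp_symm had
    · exact incomp_symm hcd
  have haX : a ∈ X := subset_perp_perp hsym _ (by simp)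
  have hcX : c ∈ X := subset_perp_perp hsym _ (by simp)
  -- every element of X is incomparable to d
  have hXd : ∀ x ∈ X, incomp x d := fun x hx => hx d hdperp
  -- X is orthoclosed
  have hclosed : X = perp r (perp r X) := by
    apply Set.Subset.antisymm (subset_perp_perp hsym X)
    apply perp_anti
    exact subset_perp_perp hsym _
  -- the family of candidate antichains
  set F : Set (Set P) :=
    {C | a ∈ C ∧ C ⊆ X ∧ (∀ y ∈ C, incomp y b) ∧ C.Pairwise r} with hF
  have haF : ({a} : Set P) ∈ F := by
    refine ⟨rfl, by simpa using haX, ?_, Set.pairwise_singleton a r⟩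
    intro y hy; rcases hy with rfl; exact hab
  obtain ⟨B, hBF, hBmax'⟩ := Set.Finite.exists_maximalFor id F (Set.toFinite F) ⟨_, haF⟩
  have hBmax : ∀ C ∈ F, id B ≤ id C → id B = id C :=
    fun C hC hle => le_antisymm hle (hBmax' hC hle)
  obtain ⟨haB, hBX, hBb, hBpw⟩ := hBF
  -- B is a basis of X
  have hbasis : IsBasis r X B := by
    refine ⟨hBX, hBpw, ?_⟩
    intro C hBC hCX hCpw
    refine Set.Subset.antisymm ?_ hBC
    intro x hxC
    by_contra hxB
    -- x is incomparable to every element of B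
    have hxperpB : ∀ y ∈ B, incomp x y := by
      intro y hyB
      exact hCpw hxC (hBC hyB) (fun hxy => hxB (hxy ▸ hyB))
    have hxX : x ∈ X := hCX hxC
    have hxd : incomp x d := hXd x hxX
    have hxa : x ≠ a := fun hxa => hxB (hxa ▸ haB)
    have hxia : incomp x a := hxperpB a haB
    -- x must be comparable to b
    by_cases hxb : incomp x b
    · -- contradicts maximality of B
      have : insert x B ∈ F := by
        refine ⟨Set.mem_insert_of_mem x haB, ?_, ?_, ?_⟩
        · exact Set.insert_subset hxX hBX
        · intro y hy; rcases hy with rfl | hy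
          · exact hxb
          · exact hBb y hy
        · haveI : Std.Symm r := ⟨fun u v => incomp_symm⟩
          exact Set.pairwise_insert_of_symm |>.mpr
            ⟨hBpw, fun y hy _ => hxperpB y hy⟩
      have heq : id B = id (insert x B) := hBmax _ this (Set.subset_insert x B)
      simp only [id] at heq
      exact hxB (heq ▸ Set.mem_insert x B)
    · rcases (not_and_or.mp hxb) with hxle | hble
      · push_neg at hxle
        exact hxd.1 (hxle.trans hbd.le)
      · push_neg at hble
        -- b ≤ x
        by_cases hxc : incomp x c
        · -- then x ∈ perp {a,c}, so incomp x x
          have : x ∈ perp r ({a, c} : Set P) := by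
            intro z hz; rcases hz with rfl | rfl
            · exact hxia
            · exact hxc
          exact incomp_irrefl x (hxX x this)
        · rcases (not_and_or.mp hxc) with hxlec | hclex
          · push_neg at hxlec
            -- b ≤ x ≤ c, covering
            rcases eq_or_lt_of_le hble with rfl | hblt
            · exact hxd.1 hbd.le
            · rcases eq_or_lt_of_le hxlec with rfl | hxltc
              · exact hxia.2 hac.le
              · exact hbc.2 hblt hxltc
          · push_neg at hclex
            exact hxia.2 (hac.le.trans hclex)
  -- now derive the contradiction
  have := hD X hclosed B hbasis
  have hbperpB : b ∈ perp r B := fun y hy => incomp_symm (hBb y hy)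
  have hc' : c ∈ perp r (perp r B) := this ▸ hcX
  exact (hc' b hbperpB).2 hbc.lt.le
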